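/- Let A and B be unital complex Banach algebras. Then the principal component A⁻¹ₑ is isometrically isomorphic to B⁻¹ₑ as a metrizable group if and only if A⁻¹ is isometrically isomorphic to B⁻¹ as a metrizable group. Moreover, in this case A is isometrically isomorphic to B as a real Banach algebra (there exists a bijective real-linear multiplicative isometry from A onto B). -/

import Mathlib

open Metric Set

section Midpoint

variable {E F : Type*} [NormedAddCommGroup E] [NormedSpace ℝ E]
  [NormedAddCommGroup F] [NormedSpace ℝ F]

/-- Auxiliary decreasing family of sets used in the Mazur–Ulam/Mankiewicz style
midpoint argument. -/
def Hset (x y : E) : ℕ → Set E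
  | 0 => {z | ‖z - x‖ ≤ ‖x - y‖ / 2 ∧ ‖z - y‖ ≤ ‖x - y‖ / 2}
  | n + 1 => {z | z ∈ Hset x y n ∧ ∀ w ∈ Hset x y n, ‖z - w‖ ≤ ‖x - y‖ / 2 ^ (n + 1)}

lemma Hset_succ_subset (x y : E) (n : ℕ) : Hset x y (n + 1) ⊆ Hset x y n :=
  fun _ hz => hz.1

lemma Hset_subset_zero (x y : E) : ∀ n, Hset x y n ⊆ Hset x y 0
  | 0 => subset_rfl
  | n + 1 => (Hset_succ_subset x y n).trans (Hset_subset_zero x y n)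

lemma Hset_key (x y : E) : ∀ n,
    (∀ z ∈ Hset x y n, ∀ w ∈ Hset x y n, ‖z - w‖ ≤ ‖x - y‖ / 2 ^ n)
    ∧ (∀ z ∈ Hset x y n, x + y - z ∈ Hset x y n)
    ∧ (2:ℝ)⁻¹ • (x + y) ∈ Hset x y n := by
  intro n
  induction n with
  | zero =>
    refine ⟨?_, ?_, ?_, ?_⟩
    · intro z hz w hw
      calc ‖z - w‖ = ‖(z - x) - (w - x)‖ := by abel_nf
        _ ≤ ‖z - x‖ + ‖w - x‖ := norm_sub_le _ _
        _ ≤ ‖x - y‖ / 2 + ‖x - y‖ / 2 := add_le_add hz.1 hw.1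
        _ = ‖x - y‖ / 2 ^ 0 := by ring
    · intro z hz
      constructor
      · have : x + y - z - x = -(z - y) := by abel
        rw [this, norm_neg]; exact hz.2
      · have : x + y - z - y = -(z - x) := by abel
        rw [this, norm_neg]; exact hz.1
    · have h1 : (2:ℝ)⁻¹ • (x + y) - x = (2:ℝ)⁻¹ • (y - x) := by module
      rw [h1, norm_smul, norm_inv, Real.norm_ofNat, norm_sub_rev y x]
      exact le_of_eq (by ring)
    · have h1 : (2:ℝ)⁻¹ • (x + y) - y = (2:ℝ)⁻¹ • (x - y) := by module
      rw [h1, norm_smul, norm_inv, Real.norm_ofNat]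
      exact le_of_eq (by ring)
  | succ n ih =>
    obtain ⟨hdiam, hpsi, hm⟩ := ih
    refine ⟨?_, ?_, ?_⟩
    · intro z hz w hw
      exact hz.2 w hw.1
    · intro z hz
      refine ⟨hpsi z hz.1, fun w hw => ?_⟩
      have h1 : x + y - z - w = -(z - (x + y - w)) := by abel
      rw [h1, norm_neg]
      exact hz.2 (x + y - w) (hpsi w hw)
    · refine ⟨hm, fun w hw => ?_⟩
      have h1 : (2:ℝ)⁻¹ • (x + y) - w = (2:ℝ)⁻¹ • ((x + y - w) - w) := by module
      rw [h1, norm_smul]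
      have h2 : ‖(x + y - w) - w‖ ≤ ‖x - y‖ / 2 ^ n := hdiam _ (hpsi w hw) w hw
      calc ‖(2:ℝ)⁻¹‖ * ‖x + y - w - w‖ ≤ (2:ℝ)⁻¹ * (‖x - y‖ / 2 ^ n) := by
            rw [norm_inv, Real.norm_ofNat]
            gcongr
        _ = ‖x - y‖ / 2 ^ (n + 1) := by ring

lemma Hset_mem_dist (x y : E) (n : ℕ) {z : E} (hz : z ∈ Hset x y n) :
    ‖z - (2:ℝ)⁻¹ • (x + y)‖ ≤ ‖x - y‖ / 2 ^ n :=
  (Hset_key x y n).1 z hz _ (Hset_key x y n).2.2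

end Midpoint
section MidpointImage

variable {E F : Type*} [NormedAddCommGroup E] [NormedSpace ℝ E]
  [NormedAddCommGroup F] [NormedSpace ℝ F]

lemma Hset_image {f : E → F} (hbij : Set.BijOn f (ball 0 1) (ball 0 1))
    (hiso : ∀ u ∈ ball (0:E) 1, ∀ v ∈ ball (0:E) 1, dist (f u) (f v) = dist u v)
    {x y : E} (hx : x ∈ ball (0:E) 1) (hy : y ∈ ball (0:E) 1)
    (hH0A : Hset x y 0 ⊆ ball 0 1) (hH0B : Hset (f x) (f y) 0 ⊆ ball 0 1) :
    ∀ n, f '' Hset x y n = Hset (f x) (f y) n := by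
  have hd : ‖f x - f y‖ = ‖x - y‖ := by
    rw [← dist_eq_norm, ← dist_eq_norm]; exact hiso x hx y hy
  have hnd : ∀ u ∈ ball (0:E) 1, ∀ v ∈ ball (0:E) 1, ‖f u - f v‖ = ‖u - v‖ := by
    intro u hu v hv; rw [← dist_eq_norm, ← dist_eq_norm]; exact hiso u hu v hv
  intro n
  induction n with
  | zero =>
    apply Set.Subset.antisymm
    · rintro _ ⟨z, hz, rfl⟩
      have hzb := hH0A hz
      exact ⟨by rw [hnd z hzb x hx, hd]; exact hz.1, by rw [hnd z hzb y hy, hd]; exact hz.2⟩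
    · intro w hw
      obtain ⟨z, hzb, rfl⟩ := hbij.surjOn (hH0B hw)
      refine ⟨z, ⟨?_, ?_⟩, rfl⟩
      · rw [← hd, ← hnd z hzb x hx]; exact hw.1
      · rw [← hd, ← hnd z hzb y hy]; exact hw.2
  | succ n ih =>
    apply Set.Subset.antisymm
    · rintro _ ⟨z, hz, rfl⟩
      have hzb := hH0A (Hset_subset_zero x y _ hz.1)
      refine ⟨by rw [← ih]; exact ⟨z, hz.1, rfl⟩, ?_⟩
      intro w hw
      rw [← ih] at hw
      obtain ⟨z', hz', rfl⟩ := hw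
      have hz'b := hH0A (Hset_subset_zero x y _ hz')
      rw [hnd z hzb z' hz'b, hd]
      exact hz.2 z' hz'
    · intro w hw
      have : w ∈ Hset (f x) (f y) n := hw.1
      rw [← ih] at this
      obtain ⟨z, hz, rfl⟩ := this
      have hzb := hH0A (Hset_subset_zero x y _ hz)
      refine ⟨z, ⟨hz, fun z' hz' => ?_⟩, rfl⟩
      have hz'b := hH0A (Hset_subset_zero x y _ hz')
      rw [← hd, ← hnd z hzb z' hz'b]
      exact hw.2 (f z') (by rw [← ih]; exact ⟨z', hz', rfl⟩)

/-- Mankiewicz-style midpoint preservation for a bijective isometry of open unit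
balls. -/
lemma midpoint_pres {f : E → F} (hbij : Set.BijOn f (ball 0 1) (ball 0 1))
    (hiso : ∀ u ∈ ball (0:E) 1, ∀ v ∈ ball (0:E) 1, dist (f u) (f v) = dist u v)
    (hf0 : f 0 = 0) {x y : E} (hx : ‖x‖ < 4⁻¹) (hy : ‖y‖ < 4⁻¹) :
    f ((2:ℝ)⁻¹ • (x + y)) = (2:ℝ)⁻¹ • (f x + f y) := by
  have hx1 : x ∈ ball (0:E) 1 := by rw [mem_ball_zero_iff]; linarith
  have hy1 : y ∈ ball (0:E) 1 := by rw [mem_ball_zero_iff]; linarith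
  have h01 : (0:E) ∈ ball (0:E) 1 := mem_ball_self one_pos
  have hfnorm : ∀ u ∈ ball (0:E) 1, ‖f u‖ = ‖u‖ := by
    intro u hu
    have := hiso u hu 0 h01
    rwa [hf0, dist_zero_right, dist_zero_right] at this
  have hd : ‖x - y‖ < 2⁻¹ := by
    calc ‖x - y‖ ≤ ‖x‖ + ‖y‖ := norm_sub_le _ _
      _ < 2⁻¹ := by linarith
  have hH0A : Hset x y 0 ⊆ ball (0:E) 1 := by
    intro z hz
    rw [mem_ball_zero_iff]
    calc ‖z‖ ≤ ‖z - x‖ + ‖x‖ := by simpa using norm_add_le (z - x) x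
      _ ≤ ‖x - y‖ / 2 + ‖x‖ := by gcongr; exact hz.1
      _ < 1 := by nlinarith [norm_nonneg (x - y)]
  have hH0B : Hset (f x) (f y) 0 ⊆ ball (0:F) 1 := by
    have hdB : ‖f x - f y‖ = ‖x - y‖ := by
      rw [← dist_eq_norm, ← dist_eq_norm]; exact hiso x hx1 y hy1
    intro z hz
    rw [mem_ball_zero_iff]
    calc ‖z‖ ≤ ‖z - f x‖ + ‖f x‖ := by simpa using norm_add_le (z - f x) (f x)
      _ ≤ ‖f x - f y‖ / 2 + ‖f x‖ := by gcongr; exact hz.1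
      _ < 1 := by rw [hdB, hfnorm x hx1]; nlinarith [norm_nonneg (x - y)]
  have himage := Hset_image hbij hiso hx1 hy1 hH0A hH0B
  have hmm : ∀ n, ‖f ((2:ℝ)⁻¹ • (x + y)) - (2:ℝ)⁻¹ • (f x + f y)‖ ≤ ‖x - y‖ / 2 ^ n := by
    intro n
    have h1 : f ((2:ℝ)⁻¹ • (x + y)) ∈ Hset (f x) (f y) n := by
      rw [← himage n]
      exact ⟨_, (Hset_key x y n).2.2, rfl⟩
    have hdB : ‖f x - f y‖ = ‖x - y‖ := by
      rw [← dist_eq_norm, ← dist_eq_norm]; exact hiso x hx1 y hy1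
    have := Hset_mem_dist (f x) (f y) n h1
    rwa [hdB] at this
  have htend : Filter.Tendsto (fun n : ℕ => ‖x - y‖ / 2 ^ n) Filter.atTop (nhds 0) := by
    simpa [div_eq_mul_inv, ← inv_pow] using
      (tendsto_pow_atTop_nhds_zero_of_lt_one (by norm_num : (0:ℝ) ≤ 2⁻¹)
        (by norm_num : (2:ℝ)⁻¹ < 1)).const_mul ‖x - y‖
  have h0 : ‖f ((2:ℝ)⁻¹ • (x + y)) - (2:ℝ)⁻¹ • (f x + f y)‖ ≤ 0 :=
    ge_of_tendsto' htend hmm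
  have := le_antisymm h0 (norm_nonneg _)
  rwa [norm_sub_eq_zero_iff] at this

end MidpointImage
section Construction

variable {A B : Type*} [NormedRing A] [NormedSpace ℝ A] [IsScalarTower ℝ A A]
  [SMulCommClass ℝ A A] [NormedRing B] [NormedSpace ℝ B] [IsScalarTower ℝ B B]
  [SMulCommClass ℝ B B]

lemma exists_pow_smul_small (a : A) : ∃ n : ℕ, ‖((2:ℝ) ^ n)⁻¹ • a‖ < 4⁻¹ := by
  obtain ⟨n, hn⟩ := exists_nat_gt (4 * ‖a‖)
  refine ⟨n, ?_⟩
  have h2 : (n:ℝ) < 2 ^ n := by exact_mod_cast Nat.lt_two_pow_self (n := n)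
  have hp : (0:ℝ) < 2 ^ n := by positivity
  rw [norm_smul, norm_inv, norm_pow, Real.norm_ofNat, inv_mul_lt_iff₀ hp]
  nlinarith

lemma exists_linear_of_f (f : A → B)
    (hbij : Set.BijOn f (ball 0 1) (ball 0 1))
    (hiso : ∀ u ∈ ball (0:A) 1, ∀ v ∈ ball (0:A) 1, dist (f u) (f v) = dist u v)
    (hf0 : f 0 = 0)
    (hfe : ∀ u v : A, ‖u‖ < 1 → ‖v‖ < 1 → f (u + v + u * v) = f u + f v + f u * f v) :
    ∃ S : A → B, (∀ x y, S (x + y) = S x + S y) ∧ (∀ (r : ℝ) (x : A), S (r • x) = r • S x)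
      ∧ (∀ x y, dist (S x) (S y) = dist x y) ∧ (∀ w : A, ‖w‖ < 4⁻¹ → S w = f w)
      ∧ (∀ x y, S (x * y) = S x * S y) := by
  -- halving
  have fhalf : ∀ u : A, ‖u‖ < 4⁻¹ → f ((2:ℝ)⁻¹ • u) = (2:ℝ)⁻¹ • f u := by
    intro u hu
    have h := midpoint_pres hbij hiso hf0 (x := u) (y := 0) hu (by norm_num)
    simpa [hf0] using h
  -- additivity on the small ball
  have fadd : ∀ u v : A, ‖u‖ < 4⁻¹ → ‖v‖ < 4⁻¹ → ‖u + v‖ < 4⁻¹ → f (u + v) = f u + f v := by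
    intro u v hu hv huv
    have h1 := midpoint_pres hbij hiso hf0 hu hv
    have h2 := fhalf (u + v) huv
    have h3 : (2:ℝ)⁻¹ • f (u + v) = (2:ℝ)⁻¹ • (f u + f v) := by rw [← h1, ← h2]
    calc f (u + v) = (2:ℝ) • ((2:ℝ)⁻¹ • f (u + v)) := by rw [smul_smul]; norm_num
      _ = (2:ℝ) • ((2:ℝ)⁻¹ • (f u + f v)) := by rw [h3]
      _ = f u + f v := by rw [smul_smul]; norm_num
  have smallnorm : ∀ (n : ℕ) (a : A), ‖((2:ℝ) ^ n)⁻¹ • a‖ = ((2:ℝ) ^ n)⁻¹ * ‖a‖ := by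
    intro n a; rw [norm_smul, norm_inv, norm_pow, Real.norm_ofNat]
  -- iterated halving
  have fpow : ∀ (n : ℕ) (u : A), ‖u‖ < 4⁻¹ → f (((2:ℝ) ^ n)⁻¹ • u) = ((2:ℝ) ^ n)⁻¹ • f u := by
    intro n
    induction n with
    | zero => intro u hu; simp
    | succ n ih =>
      intro u hu
      have h2 : (1:ℝ) ≤ 2 ^ n := one_le_pow₀ (by norm_num)
      have hsmall : ‖((2:ℝ) ^ n)⁻¹ • u‖ < 4⁻¹ := by
        rw [smallnorm]
        calc ((2:ℝ) ^ n)⁻¹ * ‖u‖ ≤ 1 * ‖u‖ :=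
              mul_le_mul_of_nonneg_right (inv_le_one_of_one_le₀ h2) (norm_nonneg u)
          _ < 4⁻¹ := by simpa using hu
      have heq : ((2:ℝ) ^ (n + 1))⁻¹ • u = (2:ℝ)⁻¹ • (((2:ℝ) ^ n)⁻¹ • u) := by
        rw [smul_smul, ← mul_inv, pow_succ, mul_comm]
      rw [heq, fhalf _ hsmall, ih u hu, smul_smul, ← mul_inv, pow_succ, mul_comm]
  have sm_mono : ∀ (m n : ℕ) (a : A), m ≤ n → ‖((2:ℝ) ^ m)⁻¹ • a‖ < 4⁻¹ →
      ‖((2:ℝ) ^ n)⁻¹ • a‖ < 4⁻¹ := by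
    intro m n a hmn h
    rw [smallnorm] at h ⊢
    calc ((2:ℝ) ^ n)⁻¹ * ‖a‖ ≤ ((2:ℝ) ^ m)⁻¹ * ‖a‖ :=
          mul_le_mul_of_nonneg_right
            (inv_anti₀ (by positivity) (pow_le_pow_right₀ (by norm_num) hmn))
            (norm_nonneg a)
      _ < 4⁻¹ := h
  -- stability of the rescaled values
  have fstep : ∀ (n : ℕ) (a : A), ‖((2:ℝ) ^ n)⁻¹ • a‖ < 4⁻¹ →
      ((2:ℝ) ^ n) • f (((2:ℝ) ^ n)⁻¹ • a) = ((2:ℝ) ^ (n + 1)) • f (((2:ℝ) ^ (n + 1))⁻¹ • a) := by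
    intro n a h
    have heq : ((2:ℝ) ^ (n + 1))⁻¹ • a = (2:ℝ)⁻¹ • (((2:ℝ) ^ n)⁻¹ • a) := by
      rw [smul_smul, ← mul_inv, pow_succ, mul_comm]
    rw [heq, fhalf _ h, smul_smul]
    congr 1
    rw [pow_succ]; ring
  have fval : ∀ (m k : ℕ) (a : A), ‖((2:ℝ) ^ m)⁻¹ • a‖ < 4⁻¹ →
      ((2:ℝ) ^ m) • f (((2:ℝ) ^ m)⁻¹ • a)
        = ((2:ℝ) ^ (m + k)) • f (((2:ℝ) ^ (m + k))⁻¹ • a) := by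
    intro m k
    induction k with
    | zero => intro a _; rfl
    | succ k ih =>
      intro a h
      rw [ih a h]
      exact fstep (m + k) a (sm_mono m (m + k) a (Nat.le_add_right _ _) h)
  choose nfun hnfun using fun a : A => exists_pow_smul_small a
  set S : A → B := fun a => ((2:ℝ) ^ (nfun a)) • f (((2:ℝ) ^ (nfun a))⁻¹ • a) with hSdef
  have Sval : ∀ (a : A) (n : ℕ), ‖((2:ℝ) ^ n)⁻¹ • a‖ < 4⁻¹ →
      S a = ((2:ℝ) ^ n) • f (((2:ℝ) ^ n)⁻¹ • a) := by
    intro a n h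
    have h1 := fval (nfun a) (max (nfun a) n - nfun a) a (hnfun a)
    have h2 := fval n (max (nfun a) n - n) a h
    rw [Nat.add_sub_cancel' (le_max_left (nfun a) n)] at h1
    rw [Nat.add_sub_cancel' (le_max_right (nfun a) n)] at h2
    rw [hSdef]
    simp only
    rw [h1, ← h2]
  have Sloc : ∀ w : A, ‖w‖ < 4⁻¹ → S w = f w := by
    intro w hw
    have := Sval w 0 (by simpa using hw)
    simpa using this
  have Sadd : ∀ x y : A, S (x + y) = S x + S y := by
    intro x y
    set n := max (nfun x) (max (nfun y) (nfun (x + y))) with hn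
    have hx := sm_mono _ n x (le_max_left _ _) (hnfun x)
    have hy := sm_mono _ n y ((le_max_left _ _).trans (le_max_right _ _)) (hnfun y)
    have hxy := sm_mono _ n (x + y) ((le_max_right _ _).trans (le_max_right _ _)) (hnfun (x + y))
    rw [Sval x n hx, Sval y n hy, Sval (x + y) n hxy]
    have hsplit : ((2:ℝ) ^ n)⁻¹ • (x + y) = ((2:ℝ) ^ n)⁻¹ • x + ((2:ℝ) ^ n)⁻¹ • y :=
      smul_add _ _ _
    rw [hsplit, fadd _ _ hx hy (by rw [← hsplit]; exact hxy), smul_add]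
  have Sdist : ∀ x y : A, dist (S x) (S y) = dist x y := by
    intro x y
    set n := max (nfun x) (nfun y) with hn
    have hx := sm_mono _ n x (le_max_left _ _) (hnfun x)
    have hy := sm_mono _ n y (le_max_right _ _) (hnfun y)
    rw [Sval x n hx, Sval y n hy, dist_smul₀]
    have hx1 : ((2:ℝ) ^ n)⁻¹ • x ∈ ball (0:A) 1 := by
      rw [mem_ball_zero_iff]
      calc ‖((2:ℝ) ^ n)⁻¹ • x‖ < 4⁻¹ := hx
        _ < 1 := by norm_num
    have hy1 : ((2:ℝ) ^ n)⁻¹ • y ∈ ball (0:A) 1 := by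
      rw [mem_ball_zero_iff]
      calc ‖((2:ℝ) ^ n)⁻¹ • y‖ < 4⁻¹ := hy
        _ < 1 := by norm_num
    rw [hiso _ hx1 _ hy1, dist_smul₀, norm_inv, norm_pow, Real.norm_ofNat, ← mul_assoc,
      mul_inv_cancel₀ (by positivity), one_mul]
  have Scont : Continuous S := (Isometry.of_dist_eq Sdist).continuous
  have hco : ⇑((AddMonoidHom.mk' S Sadd).toRealLinearMap Scont) = S :=
    AddMonoidHom.coe_toRealLinearMap _ _
  have Ssmul : ∀ (r : ℝ) (x : A), S (r • x) = r • S x := by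
    intro r x
    have := ((AddMonoidHom.mk' S Sadd).toRealLinearMap Scont).map_smul r x
    rwa [hco] at this
  have Smul : ∀ x y : A, S (x * y) = S x * S y := by
    intro a b
    set t : ℝ := (4 * (‖a‖ + ‖b‖ + ‖a * b‖ + 1))⁻¹ with ht
    have hden : (0:ℝ) < 4 * (‖a‖ + ‖b‖ + ‖a * b‖ + 1) := by positivity
    have ht0 : 0 < t := inv_pos.mpr hden
    have hkey : t * (4 * (‖a‖ + ‖b‖ + ‖a * b‖ + 1)) = 1 := inv_mul_cancel₀ (ne_of_gt hden)
    have ht1 : t ≤ 4⁻¹ := by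
      rw [ht]
      apply inv_anti₀ (by norm_num)
      nlinarith [norm_nonneg a, norm_nonneg b, norm_nonneg (a * b)]
    have hta : ‖t • a‖ < 4⁻¹ := by
      rw [norm_smul, Real.norm_eq_abs, abs_of_pos ht0, ht, inv_mul_lt_iff₀ hden]
      nlinarith [norm_nonneg b, norm_nonneg (a * b)]
    have htb : ‖t • b‖ < 4⁻¹ := by
      rw [norm_smul, Real.norm_eq_abs, abs_of_pos ht0, ht, inv_mul_lt_iff₀ hden]
      nlinarith [norm_nonneg a, norm_nonneg (a * b)]
    have hprod : (t • a) * (t • b) = (t * t) • (a * b) := smul_mul_smul_comm t a t b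
    have htw : ‖t • a + t • b + (t • a) * (t • b)‖ < 4⁻¹ := by
      have h1 : ‖t • a + t • b + (t • a) * (t • b)‖
          ≤ t * ‖a‖ + t * ‖b‖ + (t * t) * ‖a * b‖ := by
        calc ‖t • a + t • b + (t • a) * (t • b)‖
            ≤ ‖t • a + t • b‖ + ‖(t • a) * (t • b)‖ := norm_add_le _ _
          _ ≤ ‖t • a‖ + ‖t • b‖ + ‖(t • a) * (t • b)‖ := by
              gcongr; exact norm_add_le _ _
          _ = t * ‖a‖ + t * ‖b‖ + (t * t) * ‖a * b‖ := by
              rw [hprod, norm_smul, norm_smul, norm_smul]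
              rw [Real.norm_eq_abs, abs_of_pos ht0]
              rw [Real.norm_eq_abs, abs_of_pos (show (0:ℝ) < t * t by positivity)]
      have h2 : t * ‖a‖ + t * ‖b‖ + (t * t) * ‖a * b‖ < 4⁻¹ := by
        nlinarith [norm_nonneg a, norm_nonneg b, norm_nonneg (a * b), ht0, ht1]
      linarith
    have hu1 : ‖t • a‖ < 1 := lt_trans hta (by norm_num)
    have hv1 : ‖t • b‖ < 1 := lt_trans htb (by norm_num)
    have he := hfe (t • a) (t • b) hu1 hv1
    have e1 : S (t • a + t • b + (t • a) * (t • b)) = f (t • a) + f (t • b) + f (t • a) * f (t • b) := by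
      rw [Sloc _ htw, he]
    rw [← Sloc _ hta, ← Sloc _ htb] at e1
    have e2 : S (t • a + t • b + (t • a) * (t • b))
        = t • S a + t • S b + (t * t) • S (a * b) := by
      rw [Sadd, Sadd, hprod, Ssmul, Ssmul, Ssmul]
    have e3 : S (t • a) + S (t • b) + S (t • a) * S (t • b)
        = t • S a + t • S b + (t * t) • (S a * S b) := by
      rw [Ssmul, Ssmul, smul_mul_smul_comm]
    have e4 : (t * t) • S (a * b) = (t * t) • (S a * S b) := by
      have := e2.symm.trans (e1.trans e3)
      -- this : t • S a + t • S b + (t*t) • S (a*b) = t • S a + t • S b + (t*t) • (S a * S b)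
      exact add_left_cancel this
    have htt : (t * t) ≠ 0 := by positivity
    calc S (a * b) = ((t * t)⁻¹ * (t * t)) • S (a * b) := by
          rw [inv_mul_cancel₀ htt, one_smul]
      _ = (t * t)⁻¹ • ((t * t) • S (a * b)) := by rw [mul_smul]
      _ = (t * t)⁻¹ • ((t * t) • (S a * S b)) := by rw [e4]
      _ = ((t * t)⁻¹ * (t * t)) • (S a * S b) := by rw [← mul_smul]
      _ = S a * S b := by rw [inv_mul_cancel₀ htt, one_smul]
  exact ⟨S, Sadd, Ssmul, Sdist, Sloc, Smul⟩

end Construction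
section GroupLevel

variable {A B : Type*} [NormedRing A] [NormedSpace ℝ A] [IsScalarTower ℝ A A]
  [SMulCommClass ℝ A A] [NormedRing B] [NormedSpace ℝ B] [IsScalarTower ℝ B B]
  [SMulCommClass ℝ B B]

lemma f_facts {GA : Set A} {GB : Set B} (hA1 : ball (1:A) 1 ⊆ GA) (hB1 : ball (1:B) 1 ⊆ GB)
    {T : A → B} (hbij : Set.BijOn T GA GB)
    (hmul : ∀ x ∈ GA, ∀ y ∈ GA, T (x * y) = T x * T y)
    (hdist : ∀ x ∈ GA, ∀ y ∈ GA, dist (T x) (T y) = dist x y)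
    (hT1 : T 1 = 1) :
    Set.BijOn (fun w => T (1 + w) - 1) (ball 0 1) (ball 0 1)
    ∧ (∀ u ∈ ball (0:A) 1, ∀ v ∈ ball (0:A) 1,
        dist (T (1 + u) - 1) (T (1 + v) - 1) = dist u v)
    ∧ (T (1 + (0:A)) - 1 = 0)
    ∧ (∀ u v : A, ‖u‖ < 1 → ‖v‖ < 1 →
        T (1 + (u + v + u * v)) - 1
          = (T (1 + u) - 1) + (T (1 + v) - 1) + (T (1 + u) - 1) * (T (1 + v) - 1)) := by
  have h1A : (1:A) ∈ GA := hA1 (mem_ball_self one_pos)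
  have hmemA : ∀ u : A, ‖u‖ < 1 → (1 + u) ∈ GA := by
    intro u hu
    apply hA1
    rw [mem_ball_iff_norm]
    simpa using hu
  have hmemB : ∀ v : B, ‖v‖ < 1 → (1 + v) ∈ GB := by
    intro v hv
    apply hB1
    rw [mem_ball_iff_norm]
    simpa using hv
  have hdist' : ∀ u ∈ ball (0:A) 1, ∀ v ∈ ball (0:A) 1,
      dist (T (1 + u) - 1) (T (1 + v) - 1) = dist u v := by
    intro u hu v hv
    rw [mem_ball_zero_iff] at hu hv
    rw [dist_sub_right, hdist _ (hmemA u hu) _ (hmemA v hv), dist_add_left]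
  have hnorm : ∀ u : A, ‖u‖ < 1 → ‖T (1 + u) - 1‖ = ‖u‖ := by
    intro u hu
    have := hdist' u (by rwa [mem_ball_zero_iff]) 0 (by simp)
    rw [add_zero, hT1, sub_self, dist_zero_right, dist_zero_right] at this
    exact this
  refine ⟨⟨?_, ?_, ?_⟩, hdist', by rw [add_zero, hT1, sub_self], ?_⟩
  · -- mapsTo
    intro w hw
    rw [mem_ball_zero_iff] at hw ⊢
    rw [hnorm w hw]; exact hw
  · -- injOn
    intro u hu v hv h
    have h' : T (1 + u) - 1 = T (1 + v) - 1 := h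
    have := hdist' u hu v hv
    rw [h', dist_self] at this
    exact (dist_eq_zero.mp this.symm)
  · -- surjOn
    intro v hv
    rw [mem_ball_zero_iff] at hv
    obtain ⟨x, hxA, hTx⟩ := hbij.surjOn (hmemB v hv)
    have hx1 : ‖x - 1‖ < 1 := by
      have h := hdist _ hxA _ h1A
      rw [hTx, hT1, dist_eq_norm, dist_eq_norm] at h
      rw [← h]
      simpa using hv
    refine ⟨x - 1, by rwa [mem_ball_zero_iff], ?_⟩
    show T (1 + (x - 1)) - 1 = v
    have hx : (1:A) + (x - 1) = x := by abel
    rw [hx, hTx]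
    abel
  · -- functional equation
    intro u v hu hv
    have hxy : (1 + (u + v + u * v)) = (1 + u) * (1 + v) := by noncomm_ring
    rw [hxy, hmul _ (hmemA u hu) _ (hmemA v hv)]
    noncomm_ring

lemma exists_S {GA : Set A} {GB : Set B}
    (hA1 : ball (1:A) 1 ⊆ GA) (hB1 : ball (1:B) 1 ⊆ GB)
    (hBu : ∀ y ∈ GB, IsUnit y)
    (hAmul : ∀ x ∈ GA, ∀ y ∈ GA, x * y ∈ GA)
    {T : A → B} (hbij : Set.BijOn T GA GB)
    (hmul : ∀ x ∈ GA, ∀ y ∈ GA, T (x * y) = T x * T y)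
    (hdist : ∀ x ∈ GA, ∀ y ∈ GA, dist (T x) (T y) = dist x y) :
    ∃ S : A → B, Function.Bijective S ∧ (∀ x y, S (x + y) = S x + S y) ∧
      (∀ (r : ℝ) (x : A), S (r • x) = r • S x) ∧ (∀ x y, S (x * y) = S x * S y) ∧
      (∀ x y, dist (S x) (S y) = dist x y) := by
  haveI : Nonempty A := ⟨1⟩
  haveI : Nonempty B := ⟨1⟩
  have h1A : (1:A) ∈ GA := hA1 (mem_ball_self one_pos)
  have h1B : (1:B) ∈ GB := hB1 (mem_ball_self one_pos)
  -- T 1 = 1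
  have hT1 : T 1 = 1 := by
    have h : T 1 = T 1 * T 1 := by
      have := hmul 1 h1A 1 h1A
      rwa [one_mul] at this
    obtain ⟨u, hu⟩ := hBu _ (hbij.mapsTo h1A)
    have h4 : (1:B) = T 1 := by
      calc (1:B) = ↑u⁻¹ * ↑u := u.inv_mul.symm
        _ = ↑u⁻¹ * (T 1) := by rw [hu]
        _ = ↑u⁻¹ * (T 1 * T 1) := by rw [← h]
        _ = (↑u⁻¹ * T 1) * T 1 := by rw [mul_assoc]
        _ = (↑u⁻¹ * ↑u) * T 1 := by rw [hu]
        _ = T 1 := by rw [u.inv_mul, one_mul]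
    exact h4.symm
  have hmemA : ∀ u : A, ‖u‖ < 1 → (1 + u) ∈ GA := by
    intro u hu; apply hA1; rw [mem_ball_iff_norm]; simpa using hu
  have hmemB : ∀ v : B, ‖v‖ < 1 → (1 + v) ∈ GB := by
    intro v hv; apply hB1; rw [mem_ball_iff_norm]; simpa using hv
  obtain ⟨hfbij, hfiso, hf0, hfe⟩ := f_facts hA1 hB1 hbij hmul hdist hT1
  obtain ⟨S, Sadd, Ssmul, Sdist, Sloc, Smul⟩ :=
    exists_linear_of_f (fun w => T (1 + w) - 1) hfbij hfiso hf0 hfe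
  -- inverse function
  set T' : B → A := Function.invFunOn T GA with hT'def
  have hT'maps : Set.MapsTo T' GB GA := hbij.surjOn.mapsTo_invFunOn
  have hT'left : ∀ x ∈ GA, T' (T x) = x := fun x hx => hbij.injOn.leftInvOn_invFunOn hx
  have hT'right : ∀ y ∈ GB, T (T' y) = y := fun y hy => hbij.surjOn.rightInvOn_invFunOn hy
  have hT'1 : T' 1 = 1 := by rw [← hT1]; exact hT'left 1 h1A
  have hT'dist : ∀ y₁ ∈ GB, ∀ y₂ ∈ GB, dist (T' y₁) (T' y₂) = dist y₁ y₂ := by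
    intro y₁ h₁ y₂ h₂
    calc dist (T' y₁) (T' y₂) = dist (T (T' y₁)) (T (T' y₂)) :=
          (hdist _ (hT'maps h₁) _ (hT'maps h₂)).symm
      _ = dist y₁ y₂ := by rw [hT'right y₁ h₁, hT'right y₂ h₂]
  have hT'bij : Set.BijOn T' GB GA := by
    refine ⟨hT'maps, ?_, ?_⟩
    · intro y₁ h₁ y₂ h₂ h
      rw [← hT'right y₁ h₁, ← hT'right y₂ h₂, h]
    · intro x hx
      exact ⟨T x, hbij.mapsTo hx, hT'left x hx⟩
  have hT'mul : ∀ y₁ ∈ GB, ∀ y₂ ∈ GB, T' (y₁ * y₂) = T' y₁ * T' y₂ := by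
    intro y₁ h₁ y₂ h₂
    have hx12 : T' y₁ * T' y₂ ∈ GA := hAmul _ (hT'maps h₁) _ (hT'maps h₂)
    have h : T (T' y₁ * T' y₂) = y₁ * y₂ := by
      rw [hmul _ (hT'maps h₁) _ (hT'maps h₂), hT'right y₁ h₁, hT'right y₂ h₂]
    rw [← h, hT'left _ hx12]
  obtain ⟨hf'bij, hf'iso, hf'0, hf'e⟩ := f_facts hB1 hA1 hT'bij hT'mul hT'dist hT'1
  obtain ⟨S', S'add, S'smul, S'dist, S'loc, S'mul⟩ :=
    exists_linear_of_f (fun w => T' (1 + w) - 1) hf'bij hf'iso hf'0 hf'e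
  -- norms
  have hnormf : ∀ u : A, ‖u‖ < 1 → ‖T (1 + u) - 1‖ = ‖u‖ := by
    intro u hu
    have := hfiso u (by rwa [mem_ball_zero_iff]) 0 (by simp)
    rw [add_zero, hT1, sub_self, dist_zero_right, dist_zero_right] at this
    exact this
  have hnormf' : ∀ v : B, ‖v‖ < 1 → ‖T' (1 + v) - 1‖ = ‖v‖ := by
    intro v hv
    have := hf'iso v (by rwa [mem_ball_zero_iff]) 0 (by simp)
    rw [add_zero, hT'1, sub_self, dist_zero_right, dist_zero_right] at this
    exact this
  -- local inverse identities
  have hfe1 : ∀ u : A, ‖u‖ < 1 → T' (1 + (T (1 + u) - 1)) - 1 = u := by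
    intro u hu
    have h : (1:B) + (T (1 + u) - 1) = T (1 + u) := by abel
    rw [h, hT'left _ (hmemA u hu)]
    abel
  have hfe2 : ∀ v : B, ‖v‖ < 1 → T (1 + (T' (1 + v) - 1)) - 1 = v := by
    intro v hv
    have h : (1:A) + (T' (1 + v) - 1) = T' (1 + v) := by abel
    rw [h, hT'right _ (hmemB v hv)]
    abel
  have leftinv : ∀ a : A, S' (S a) = a := by
    intro a
    obtain ⟨n, hn⟩ := exists_pow_smul_small a
    set u := ((2:ℝ) ^ n)⁻¹ • a with hudef
    have hu1 : ‖u‖ < 1 := lt_trans hn (by norm_num)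
    have ha : a = ((2:ℝ) ^ n) • u := by
      rw [hudef, smul_smul, mul_inv_cancel₀ (by positivity), one_smul]
    have hfu_small : ‖T (1 + u) - 1‖ < 4⁻¹ := by rw [hnormf u hu1]; exact hn
    calc S' (S a) = S' (((2:ℝ) ^ n) • S u) := by rw [ha, Ssmul]
      _ = ((2:ℝ) ^ n) • S' (S u) := S'smul _ _
      _ = ((2:ℝ) ^ n) • S' (T (1 + u) - 1) := by rw [Sloc u hn]
      _ = ((2:ℝ) ^ n) • (T' (1 + (T (1 + u) - 1)) - 1) := by rw [S'loc _ hfu_small]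
      _ = ((2:ℝ) ^ n) • u := by rw [hfe1 u hu1]
      _ = a := ha.symm
  have rightinv : ∀ b : B, S (S' b) = b := by
    intro b
    obtain ⟨n, hn⟩ := exists_pow_smul_small b
    set v := ((2:ℝ) ^ n)⁻¹ • b with hvdef
    have hv1 : ‖v‖ < 1 := lt_trans hn (by norm_num)
    have hb : b = ((2:ℝ) ^ n) • v := by
      rw [hvdef, smul_smul, mul_inv_cancel₀ (by positivity), one_smul]
    have hfv_small : ‖T' (1 + v) - 1‖ < 4⁻¹ := by rw [hnormf' v hv1]; exact hn
    calc S (S' b) = S (((2:ℝ) ^ n) • S' v) := by rw [hb, S'smul]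
      _ = ((2:ℝ) ^ n) • S (S' v) := Ssmul _ _
      _ = ((2:ℝ) ^ n) • S (T' (1 + v) - 1) := by rw [S'loc v hn]
      _ = ((2:ℝ) ^ n) • (T (1 + (T' (1 + v) - 1)) - 1) := by rw [Sloc _ hfv_small]
      _ = ((2:ℝ) ^ n) • v := by rw [hfe2 v hv1]
      _ = b := hb.symm
  exact ⟨S, Function.bijective_iff_has_inverse.mpr ⟨S', leftinv, rightinv⟩,
    Sadd, Ssmul, Smul, Sdist⟩

end GroupLevel
section Helpers

variable {R : Type*} [NormedRing R] [NormedSpace ℝ R] [CompleteSpace R]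

lemma ball_subset_units : ball (1:R) 1 ⊆ {x : R | IsUnit x} := by
  intro x hx
  rw [mem_ball_iff_norm'] at hx
  exact sub_sub_self 1 x ▸ (Units.oneSub (1 - x) hx).isUnit

lemma ball_subset_comp :
    ball (1:R) 1 ⊆ connectedComponentIn {x : R | IsUnit x} 1 :=
  (convex_ball (1:R) 1).isPreconnected.subset_connectedComponentIn
    (mem_ball_self one_pos) ball_subset_units

lemma one_mem_comp : (1:R) ∈ connectedComponentIn {x : R | IsUnit x} 1 :=
  mem_connectedComponentIn (show (1:R) ∈ {x : R | IsUnit x} from isUnit_one)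

lemma comp_mul_mem {x y : R}
    (hx : x ∈ connectedComponentIn {x : R | IsUnit x} 1)
    (hy : y ∈ connectedComponentIn {x : R | IsUnit x} 1) :
    x * y ∈ connectedComponentIn {x : R | IsUnit x} 1 := by
  have hxu : IsUnit x := connectedComponentIn_subset {x : R | IsUnit x} 1 hx
  have himg : (fun z => x * z) '' connectedComponentIn {x : R | IsUnit x} 1
      ⊆ connectedComponentIn {x : R | IsUnit x} x := by
    apply IsPreconnected.subset_connectedComponentIn
    · exact isPreconnected_connectedComponentIn.image _
        (continuous_const.mul continuous_id).continuousOn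
    · exact ⟨1, one_mem_comp, mul_one x⟩
    · rintro _ ⟨z, hz, rfl⟩
      exact hxu.mul (connectedComponentIn_subset {x : R | IsUnit x} 1 hz)
  have heq := connectedComponentIn_eq hx
  rw [heq]
  exact himg ⟨y, hy, rfl⟩

end Helpers
/-- Two subsets (typically subgroups of the invertible groups) of normed rings
are isometrically isomorphic as metrizable groups if there is a bijection
between them that is multiplicative and preserves the norm distance. -/
def IsIsometricallyIsomorphicGroup {A B : Type*} [NormedRing A] [NormedRing B]
    (GA : Set A) (GB : Set B) : Prop :=
  ∃ T : A → B, Set.BijOn T GA GB ∧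
    (∀ x ∈ GA, ∀ y ∈ GA, T (x * y) = T x * T y) ∧
    (∀ x ∈ GA, ∀ y ∈ GA, dist (T x) (T y) = dist x y)

/-- Corollary 4.2: for unital complex Banach algebras `A` and `B`, the
principal components `A⁻¹ₑ` and `B⁻¹ₑ` are isometrically isomorphic as
metrizable groups if and only if the full invertible groups `A⁻¹` and `B⁻¹`
are; in this case `A` is isometrically isomorphic to `B` as a real Banach
algebra. -/
theorem principal_component_isometric_iso_iff_units_isometric_iso
    {A B : Type*} [NormedRing A] [NormedAlgebra ℂ A] [CompleteSpace A]
    [NormedRing B] [NormedAlgebra ℂ B] [CompleteSpace B] :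
    (IsIsometricallyIsomorphicGroup
        (connectedComponentIn {x : A | IsUnit x} 1)
        (connectedComponentIn {y : B | IsUnit y} 1) ↔
      IsIsometricallyIsomorphicGroup {x : A | IsUnit x} {y : B | IsUnit y}) ∧
    (IsIsometricallyIsomorphicGroup
        (connectedComponentIn {x : A | IsUnit x} 1)
        (connectedComponentIn {y : B | IsUnit y} 1) →
      ∃ S : A → B,
        Function.Bijective S ∧
        (∀ x y : A, S (x + y) = S x + S y) ∧
        (∀ (r : ℝ) (x : A), S (r • x) = r • S x) ∧
        (∀ x y : A, S (x * y) = S x * S y) ∧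
        (∀ x y : A, dist (S x) (S y) = dist x y)) := by
  classical
  -- From an isometric isomorphism of the principal components, get `S`.
  have key₁ : IsIsometricallyIsomorphicGroup
      (connectedComponentIn {x : A | IsUnit x} 1)
      (connectedComponentIn {y : B | IsUnit y} 1) →
      ∃ S : A → B, Function.Bijective S ∧ (∀ x y, S (x + y) = S x + S y) ∧
        (∀ (r : ℝ) (x : A), S (r • x) = r • S x) ∧ (∀ x y, S (x * y) = S x * S y) ∧
        (∀ x y, dist (S x) (S y) = dist x y) := by
    rintro ⟨T, hbij, hmul, hdist⟩
    exact exists_S ball_subset_comp ball_subset_comp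
      (fun y hy => connectedComponentIn_subset {y : B | IsUnit y} 1 hy)
      (fun x hx y hy => comp_mul_mem hx hy) hbij hmul hdist
  -- From an isometric isomorphism of the unit groups, get `S`.
  have key₂ : IsIsometricallyIsomorphicGroup {x : A | IsUnit x} {y : B | IsUnit y} →
      ∃ S : A → B, Function.Bijective S ∧ (∀ x y, S (x + y) = S x + S y) ∧
        (∀ (r : ℝ) (x : A), S (r • x) = r • S x) ∧ (∀ x y, S (x * y) = S x * S y) ∧
        (∀ x y, dist (S x) (S y) = dist x y) := by
    rintro ⟨T, hbij, hmul, hdist⟩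
    exact exists_S ball_subset_units ball_subset_units (fun y hy => hy)
      (fun x hx y hy => hx.mul hy) hbij hmul hdist
  -- From `S`, recover both isometric isomorphisms.
  have transfer : ∀ S : A → B, Function.Bijective S → (∀ x y, S (x + y) = S x + S y) →
      (∀ x y, S (x * y) = S x * S y) → (∀ x y, dist (S x) (S y) = dist x y) →
      IsIsometricallyIsomorphicGroup {x : A | IsUnit x} {y : B | IsUnit y}
      ∧ IsIsometricallyIsomorphicGroup
          (connectedComponentIn {x : A | IsUnit x} 1)
          (connectedComponentIn {y : B | IsUnit y} 1) := by
    intro S hSbij hSadd hSmul hSdist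
    obtain ⟨g, hgl, hgr⟩ := Function.bijective_iff_has_inverse.mp hSbij
    have hS1 : S 1 = 1 := by
      have h1 : S (g 1) = 1 := hgr 1
      have h2 : (1:B) = S (g 1 * 1) := by rw [mul_one, h1]
      rw [hSmul, h1, one_mul] at h2
      exact h2.symm
    have hgmul : ∀ y₁ y₂ : B, g (y₁ * y₂) = g y₁ * g y₂ := by
      intro y₁ y₂
      apply hSbij.1
      rw [hgr, hSmul, hgr, hgr]
    have hg1 : g 1 = 1 := by
      apply hSbij.1
      rw [hgr, hS1]
    have hSunit : ∀ x : A, IsUnit x → IsUnit (S x) := by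
      rintro x ⟨u, rfl⟩
      refine ⟨⟨S u, S ↑u⁻¹, ?_, ?_⟩, rfl⟩
      · rw [← hSmul, Units.mul_inv, hS1]
      · rw [← hSmul, Units.inv_mul, hS1]
    have hgunit : ∀ y : B, IsUnit y → IsUnit (g y) := by
      rintro y ⟨u, rfl⟩
      refine ⟨⟨g u, g ↑u⁻¹, ?_, ?_⟩, rfl⟩
      · rw [← hgmul, Units.mul_inv, hg1]
      · rw [← hgmul, Units.inv_mul, hg1]
    have hgdist : ∀ y₁ y₂ : B, dist (g y₁) (g y₂) = dist y₁ y₂ := by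
      intro y₁ y₂
      calc dist (g y₁) (g y₂) = dist (S (g y₁)) (S (g y₂)) := (hSdist _ _).symm
        _ = dist y₁ y₂ := by rw [hgr, hgr]
    have hScont : Continuous S := (Isometry.of_dist_eq hSdist).continuous
    have hgcont : Continuous g := (Isometry.of_dist_eq hgdist).continuous
    constructor
    · exact ⟨S, ⟨fun x hx => hSunit x hx, hSbij.1.injOn,
        fun y hy => ⟨g y, hgunit y hy, hgr y⟩⟩,
        fun x _ y _ => hSmul x y, fun x _ y _ => hSdist x y⟩
    · have himg1 : S '' connectedComponentIn {x : A | IsUnit x} 1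
          ⊆ connectedComponentIn {y : B | IsUnit y} 1 := by
        apply IsPreconnected.subset_connectedComponentIn
        · exact isPreconnected_connectedComponentIn.image _ hScont.continuousOn
        · exact ⟨1, one_mem_comp, hS1⟩
        · rintro _ ⟨z, hz, rfl⟩
          exact hSunit z (connectedComponentIn_subset {x : A | IsUnit x} 1 hz)
      have himg2 : g '' connectedComponentIn {y : B | IsUnit y} 1
          ⊆ connectedComponentIn {x : A | IsUnit x} 1 := by
        apply IsPreconnected.subset_connectedComponentIn
        · exact isPreconnected_connectedComponentIn.image _ hgcont.continuousOn
        · exact ⟨1, one_mem_comp, hg1⟩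
        · rintro _ ⟨z, hz, rfl⟩
          exact hgunit z (connectedComponentIn_subset {y : B | IsUnit y} 1 hz)
      exact ⟨S, ⟨fun x hx => himg1 ⟨x, hx, rfl⟩, hSbij.1.injOn,
        fun y hy => ⟨g y, himg2 ⟨y, hy, rfl⟩, hgr y⟩⟩,
        fun x _ y _ => hSmul x y, fun x _ y _ => hSdist x y⟩
  constructor
  · constructor
    · intro h
      obtain ⟨S, hSbij, hSadd, hSsmul, hSmul, hSdist⟩ := key₁ h
      exact (transfer S hSbij hSadd hSmul hSdist).1
    · intro h
      obtain ⟨S, hSbij, hSadd, hSsmul, hSmul, hSdist⟩ := key₂ h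
      exact (transfer S hSbij hSadd hSmul hSdist).2
  · intro h
    exact key₁ h
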